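/- For every real ε > 0, every weighted graph G = (V,E,ω) that admits a 1-page book-embedding (i.e., every weighted outerplanar graph) admits a two-dimensional book-embedding whose area is at most Σ_{e∈E} ω(e) + ε. -/

import Mathlib

namespace Schematic

/-- A 1-page book-embedding of `G`: vertices are linearly ordered via an injective
real-valued placement `f`, and no two edges cross. -/
def IsBE {V : Type*} (G : SimpleGraph V) (f : V → ℝ) : Prop :=
  Function.Injective f ∧
  ∀ a b c d : V, G.Adj a b → G.Adj c d → ¬ (f a < f c ∧ f c < f b ∧ f b < f d)

/-- Edge `(u,v)` wraps around edge `(w,z)` (equivalently, `(w,z)` is nested into `(u,v)`),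
where `(w,z)` is written in increasing order. -/
def Wraps {V : Type*} (G : SimpleGraph V) (f : V → ℝ) (u v w z : V) : Prop :=
  G.Adj u v ∧ G.Adj w z ∧ s(u, v) ≠ s(w, z) ∧
  f u ≤ f w ∧ f w < f z ∧ f z ≤ f v

/-- A two-dimensional book-embedding of a weighted graph: a supporting 1-page
book-embedding given by the x-coordinates `x`, and for each edge `(u,v)` with `u ≺ v`
a rectangle `[x u, x v] × [ylo u v, yhi u v]` with `ylo u v ≥ 0`, area equal to the
weight of the edge, and `ylo u v` equal to the maximum of `yhi` over the edges nested
into `(u,v)` (`0` if there is no such edge). -/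
def IsTwoDimBE {V : Type*} (G : SimpleGraph V) (ω : V → V → ℝ)
    (x : V → ℝ) (ylo yhi : V → V → ℝ) : Prop :=
  IsBE G x ∧
  (∀ u v : V, ylo u v = ylo v u) ∧
  (∀ u v : V, yhi u v = yhi v u) ∧
  (∀ u v : V, G.Adj u v → 0 ≤ ylo u v) ∧
  (∀ u v : V, G.Adj u v → x u < x v →
    (x v - x u) * (yhi u v - ylo u v) = ω u v) ∧
  (∀ u v : V, G.Adj u v → x u < x v →
    (∀ w z : V, Wraps G x u v w z → yhi w z ≤ ylo u v) ∧
    ((∃ w z : V, Wraps G x u v w z ∧ ylo u v = yhi w z) ∨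
     ((¬ ∃ w z : V, Wraps G x u v w z) ∧ ylo u v = 0)))

open Classical in
/-- The sum of the weights of all edges of `G` (each unordered edge counted once,
in its `f`-increasing orientation). -/
noncomputable def totalWeight {V : Type*} [Fintype V] (G : SimpleGraph V)
    (ω : V → V → ℝ) (f : V → ℝ) : ℝ :=
  ∑ p : V × V, if G.Adj p.1 p.2 ∧ f p.1 < f p.2 then ω p.1 p.2 else 0

/-! ### Auxiliary development -/

section Aux

open Classical Finset

variable {V : Type*} [Fintype V]

/-- `p` is nested into (or equal to) `q`, comparing the `f`-intervals. -/
def Nst (f : V → ℝ) (p q : V × V) : Prop := f q.1 ≤ f p.1 ∧ f p.2 ≤ f q.2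

/-- The set of "gaps" (indexed by their left vertex) strictly under the edge `p`. -/
noncomputable def gapsUnder (f : V → ℝ) (p : V × V) : Finset V :=
  Finset.univ.filter (fun q => f p.1 ≤ f q ∧ f q < f p.2)

/-- Width of edge `p` under gap-assignment `g`. -/
noncomputable def wd (f : V → ℝ) (g : V → ℝ) (p : V × V) : ℝ :=
  ∑ q ∈ gapsUnder f p, g q

lemma nst_refl (f : V → ℝ) (p : V × V) : Nst f p p := ⟨le_refl _, le_refl _⟩

lemma nst_trans {f : V → ℝ} {p q r : V × V} (h1 : Nst f p q) (h2 : Nst f q r) :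
    Nst f p r := ⟨le_trans h2.1 h1.1, le_trans h1.2 h2.2⟩

lemma nst_antisymm {f : V → ℝ} (hinj : Function.Injective f) {p q : V × V}
    (h1 : Nst f p q) (h2 : Nst f q p) : p = q := by
  have e1 : f p.1 = f q.1 := le_antisymm h2.1 h1.1
  have e2 : f p.2 = f q.2 := le_antisymm h1.2 h2.2
  exact Prod.ext (hinj e1) (hinj e2)

lemma nst_gapsUnder {f : V → ℝ} {p q : V × V} (h : Nst f p q) :
    gapsUnder f p ⊆ gapsUnder f q := by
  intro a ha
  simp only [gapsUnder, mem_filter, mem_univ, true_and] at ha ⊢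
  exact ⟨le_trans h.1 ha.1, lt_of_lt_of_le ha.2 h.2⟩

lemma wd_pos {f : V → ℝ} {g : V → ℝ} (hg : ∀ v, 0 < g v) {p : V × V}
    (hp : f p.1 < f p.2) : 0 < wd f g p := by
  apply Finset.sum_pos (fun i _ => hg i)
  exact ⟨p.1, by simp [gapsUnder, le_refl, hp]⟩

/-- In a nonempty finite nested chain there is a top element. -/
lemma chain_top {f : V → ℝ} (hinj : Function.Injective f) {C : Finset (V × V)}
    (hne : C.Nonempty) (hch : ∀ p ∈ C, ∀ q ∈ C, Nst f p q ∨ Nst f q p) :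
    ∃ t ∈ C, ∀ p ∈ C, Nst f p t := by
  obtain ⟨t, htC, htmax⟩ := C.exists_max_image (fun p => f p.2 - f p.1) hne
  refine ⟨t, htC, fun p hp => ?_⟩
  rcases hch p hp t htC with h | h
  · exact h
  · -- Nst t p together with maximal width forces p = t
    have hw := htmax p hp
    obtain ⟨ha, hb⟩ := h
    have e1 : f p.1 = f t.1 := by linarith
    have e2 : f p.2 = f t.2 := by linarith
    rw [Prod.ext (hinj e1) (hinj e2)]
    exact nst_refl f t

/-- Chains contained in `E` whose top element is `e`. -/
noncomputable def chainsTop (f : V → ℝ) (E : Finset (V × V)) (e : V × V) :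
    Finset (Finset (V × V)) :=
  E.powerset.filter (fun C => e ∈ C ∧ (∀ p ∈ C, Nst f p e) ∧
    ∀ p ∈ C, ∀ q ∈ C, Nst f p q ∨ Nst f q p)

/-- Maximum, over nested chains topped by `e`, of the sum of heights. -/
noncomputable def Psi (f : V → ℝ) (E : Finset (V × V)) (h : V × V → ℝ) (e : V × V) : ℝ :=
  if hne : ((chainsTop f E e).image (fun C => ∑ p ∈ C, h p)).Nonempty then
    ((chainsTop f E e).image (fun C => ∑ p ∈ C, h p)).max' hne
  else 0

/-- The edges of `E` properly nested into `e`. -/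
noncomputable def Wr (f : V → ℝ) (E : Finset (V × V)) (e : V × V) : Finset (V × V) :=
  E.filter (fun p => p ≠ e ∧ Nst f p e)

/-- Maximum of `Psi` over edges properly nested into `e` (0 if none). -/
noncomputable def Mlo (f : V → ℝ) (E : Finset (V × V)) (h : V × V → ℝ) (e : V × V) : ℝ :=
  if hne : ((Wr f E e).image (Psi f E h)).Nonempty then
    ((Wr f E e).image (Psi f E h)).max' hne
  else 0

lemma singleton_mem_chainsTop {f : V → ℝ} {E : Finset (V × V)} {e : V × V} (he : e ∈ E) :
    {e} ∈ chainsTop f E e := by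
  refine Finset.mem_filter.mpr ⟨Finset.mem_powerset.mpr (Finset.singleton_subset_iff.mpr he),
    Finset.mem_singleton_self e, fun p hp => ?_, fun p hp q hq => ?_⟩
  · rw [Finset.mem_singleton.mp hp]; exact nst_refl f e
  · rw [Finset.mem_singleton.mp hp, Finset.mem_singleton.mp hq]
    exact Or.inl (nst_refl f e)

lemma chainsTop_nonempty {f : V → ℝ} {E : Finset (V × V)} {h : V × V → ℝ} {e : V × V}
    (he : e ∈ E) :
    ((chainsTop f E e).image (fun C => ∑ p ∈ C, h p)).Nonempty :=
  ⟨_, Finset.mem_image_of_mem _ (singleton_mem_chainsTop he)⟩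

lemma le_psi {f : V → ℝ} {E : Finset (V × V)} {h : V × V → ℝ} {e : V × V} (he : e ∈ E)
    {C : Finset (V × V)} (hC : C ∈ chainsTop f E e) :
    ∑ p ∈ C, h p ≤ Psi f E h e := by
  rw [Psi, dif_pos (chainsTop_nonempty (f := f) (h := h) he)]
  exact Finset.le_max' _ (∑ p ∈ C, h p) (Finset.mem_image_of_mem (fun C => ∑ p ∈ C, h p) hC)

lemma psi_le {f : V → ℝ} {E : Finset (V × V)} {h : V × V → ℝ} {e : V × V} (he : e ∈ E)
    {B : ℝ} (hB : ∀ C ∈ chainsTop f E e, ∑ p ∈ C, h p ≤ B) :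
    Psi f E h e ≤ B := by
  rw [Psi, dif_pos (chainsTop_nonempty (f := f) (h := h) he)]
  apply Finset.max'_le
  intro y hy
  obtain ⟨C, hC, rfl⟩ := Finset.mem_image.mp hy
  exact hB C hC

lemma psi_attained {f : V → ℝ} {E : Finset (V × V)} {h : V × V → ℝ} {e : V × V}
    (he : e ∈ E) : ∃ C ∈ chainsTop f E e, Psi f E h e = ∑ p ∈ C, h p := by
  rw [Psi, dif_pos (chainsTop_nonempty (f := f) (h := h) he)]
  have := Finset.max'_mem _ (chainsTop_nonempty (f := f) (h := h) he)
  obtain ⟨C, hC, hCe⟩ := Finset.mem_image.mp this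
  exact ⟨C, hC, hCe.symm⟩

lemma h_le_psi {f : V → ℝ} {E : Finset (V × V)} {h : V × V → ℝ} {e : V × V} (he : e ∈ E) :
    h e ≤ Psi f E h e := by
  have := le_psi (f := f) (h := h) he (singleton_mem_chainsTop (f := f) he)
  simpa using this

lemma le_mlo {f : V → ℝ} {E : Finset (V × V)} {h : V × V → ℝ} {e p : V × V}
    (hp : p ∈ Wr f E e) : Psi f E h p ≤ Mlo f E h e := by
  rw [Mlo, dif_pos ⟨_, Finset.mem_image_of_mem _ hp⟩]
  exact Finset.le_max' _ (Psi f E h p) (Finset.mem_image_of_mem _ hp)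

lemma mlo_cases (f : V → ℝ) (E : Finset (V × V)) (h : V × V → ℝ) (e : V × V) :
    (∃ p ∈ Wr f E e, Mlo f E h e = Psi f E h p) ∨
      ((Wr f E e) = ∅ ∧ Mlo f E h e = 0) := by
  rcases (Wr f E e).eq_empty_or_nonempty with hW | hW
  · right
    refine ⟨hW, ?_⟩
    rw [Mlo, dif_neg]
    simp [hW]
  · left
    have hne : ((Wr f E e).image (Psi f E h)).Nonempty := hW.image _
    have := Finset.max'_mem _ hne
    obtain ⟨p, hp, hpe⟩ := Finset.mem_image.mp this
    refine ⟨p, hp, ?_⟩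
    rw [Mlo, dif_pos hne, hpe]

lemma mlo_nonneg {f : V → ℝ} {E : Finset (V × V)} {h : V × V → ℝ}
    (hh : ∀ p ∈ E, 0 ≤ h p) (e : V × V) : 0 ≤ Mlo f E h e := by
  rcases mlo_cases f E h e with ⟨p, hp, heq⟩ | ⟨_, heq⟩
  · have hpE : p ∈ E := Finset.mem_of_mem_filter _ hp
    calc (0:ℝ) ≤ h p := hh p hpE
    _ ≤ Psi f E h p := h_le_psi hpE
    _ = Mlo f E h e := heq.symm
  · rw [heq]

/-- The structural recursion: `Psi e = h e + Mlo e`. -/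
lemma psi_eq {f : V → ℝ} (hinj : Function.Injective f) {E : Finset (V × V)}
    {h : V × V → ℝ} (hh : ∀ p ∈ E, 0 ≤ h p) {e : V × V} (he : e ∈ E) :
    Psi f E h e = h e + Mlo f E h e := by
  apply le_antisymm
  · apply psi_le he
    intro C hC
    simp only [chainsTop, Finset.mem_filter, Finset.mem_powerset] at hC
    obtain ⟨hCE, heC, htop, hch⟩ := hC
    rw [← Finset.add_sum_erase _ _ heC]
    rcases (C.erase e).eq_empty_or_nonempty with hCe | hCe
    · rw [hCe]
      simp only [Finset.sum_empty]
      exact add_le_add_right (mlo_nonneg hh e) _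
    · obtain ⟨t, htC, httop⟩ := chain_top hinj hCe
        (fun p hp q hq => hch p (Finset.mem_of_mem_erase hp) q (Finset.mem_of_mem_erase hq))
      have htE : t ∈ E := hCE (Finset.mem_of_mem_erase htC)
      have htW : t ∈ Wr f E e := by
        simp only [Wr, Finset.mem_filter]
        exact ⟨htE, (Finset.mem_erase.mp htC).1, htop t (Finset.mem_of_mem_erase htC)⟩
      have hCt : C.erase e ∈ chainsTop f E t := by
        simp only [chainsTop, Finset.mem_filter, Finset.mem_powerset]
        refine ⟨fun p hp => hCE (Finset.mem_of_mem_erase hp), htC, httop, ?_⟩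
        exact fun p hp q hq => hch p (Finset.mem_of_mem_erase hp) q (Finset.mem_of_mem_erase hq)
      have := le_psi (f := f) (h := h) htE hCt
      have h2 := le_mlo (f := f) (h := h) htW
      linarith
  · rcases mlo_cases f E h e with ⟨t, htW, heq⟩ | ⟨hW, heq⟩
    · obtain ⟨htE, hte, htnst⟩ := Finset.mem_filter.mp htW
      obtain ⟨Ct, hCt, hPsit⟩ := psi_attained (h := h) htE
      simp only [chainsTop, Finset.mem_filter, Finset.mem_powerset] at hCt
      obtain ⟨hCtE, htCt, httop, htch⟩ := hCt
      have heCt : e ∉ Ct := by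
        intro heCt
        exact hte (nst_antisymm hinj htnst (httop e heCt))
      have hC : insert e Ct ∈ chainsTop f E e := by
        simp only [chainsTop, Finset.mem_filter, Finset.mem_powerset]
        refine ⟨Finset.insert_subset he hCtE, Finset.mem_insert_self _ _, ?_, ?_⟩
        · intro p hp
          rcases Finset.mem_insert.mp hp with rfl | hp
          · exact nst_refl f p
          · exact nst_trans (httop p hp) htnst
        · intro p hp q hq
          rcases Finset.mem_insert.mp hp with hpe | hp' <;>
            rcases Finset.mem_insert.mp hq with hqe | hq'
          · subst hpe; subst hqe; exact Or.inl (nst_refl f _)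
          · subst hpe; exact Or.inr (nst_trans (httop q hq') htnst)
          · subst hqe; exact Or.inl (nst_trans (httop p hp') htnst)
          · exact htch p hp' q hq' 
      have := le_psi (f := f) (h := h) he hC
      rw [Finset.sum_insert heCt] at this
      rw [heq, hPsit]
      linarith
    · rw [heq, add_zero]
      exact h_le_psi he

end Aux

section GapLemma

open Classical Finset

variable {V : Type*} [Fintype V]

set_option maxHeartbeats 1000000 in
/-- The key combinatorial lemma: for a laminar family `F` and any `ε > 0`, there is a
positive gap assignment of total at most 1 such that every nested chain in `F` has
height sum at most `∑ ω + ε`. -/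
lemma gapLemma (f : V → ℝ) (hinj : Function.Injective f) (ω' : V × V → ℝ)
    (E : Finset (V × V)) (hE : ∀ p ∈ E, f p.1 < f p.2) (hω : ∀ p ∈ E, 0 < ω' p)
    (hlam : ∀ p ∈ E, ∀ q ∈ E, p ≠ q →
      Nst f p q ∨ Nst f q p ∨ f p.2 ≤ f q.1 ∨ f q.2 ≤ f p.1) :
    ∀ (k : ℕ) (F : Finset (V × V)), F.card ≤ k → F ⊆ E → ∀ ε : ℝ, 0 < ε →
    ∃ g : V → ℝ, (∀ v, 0 < g v) ∧ (∑ v, g v) ≤ 1 ∧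
      ∀ C : Finset (V × V), C ⊆ F → (∀ p ∈ C, ∀ q ∈ C, Nst f p q ∨ Nst f q p) →
        ∑ p ∈ C, ω' p / wd f g p ≤ (∑ p ∈ F, ω' p) + ε := by
  have triv : ∀ ε : ℝ, 0 < ε → ∀ F : Finset (V × V), F = ∅ →
      ∃ g : V → ℝ, (∀ v, 0 < g v) ∧ (∑ v, g v) ≤ 1 ∧
      ∀ C : Finset (V × V), C ⊆ F → (∀ p ∈ C, ∀ q ∈ C, Nst f p q ∨ Nst f q p) →
        ∑ p ∈ C, ω' p / wd f g p ≤ (∑ p ∈ F, ω' p) + ε := by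
    intro ε hε F hF
    refine ⟨fun _ => ((Fintype.card V : ℝ) + 1)⁻¹, fun v => by positivity, ?_, ?_⟩
    · rw [Finset.sum_const, Finset.card_univ, nsmul_eq_mul]
      rw [mul_inv_le_iff₀ (by positivity), one_mul]
      linarith
    · intro C hC hch
      have hCe : C = ∅ := Finset.subset_empty.mp (hF ▸ hC)
      subst hCe; subst hF
      simp [le_of_lt hε]
  intro k
  induction k with
  | zero =>
    intro F hcard hFE ε hε
    exact triv ε hε F (Finset.card_eq_zero.mp (Nat.le_zero.mp hcard))
  | succ k ih =>
    intro F hcard hFE ε hε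
    rcases F.eq_empty_or_nonempty with hFe | hFne
    · exact triv ε hε F hFe
    obtain ⟨e₀, he₀F, he₀max⟩ := F.exists_max_image (fun p => f p.2 - f p.1) hFne
    have he₀E : e₀ ∈ E := hFE he₀F
    have he₀lt : f e₀.1 < f e₀.2 := hE e₀ he₀E
    have hσ0 : (0:ℝ) ≤ ∑ p ∈ F, ω' p :=
      Finset.sum_nonneg fun p hp => le_of_lt (hω p (hFE hp))
    have hmaxeq : ∀ a ∈ F, Nst f e₀ a → a = e₀ := by
      intro a haF hn
      have hw := he₀max a haF
      obtain ⟨h1, h2⟩ := hn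
      have e1 : f a.1 = f e₀.1 := by linarith
      have e2 : f a.2 = f e₀.2 := by linarith
      exact Prod.ext (hinj e1) (hinj e2)
    have hnst : ∀ a ∈ F, ¬ (f a.2 ≤ f e₀.1 ∨ f e₀.2 ≤ f a.1) → Nst f a e₀ := by
      intro a haF hnd
      by_cases hae : a = e₀
      · subst hae; exact nst_refl f a
      · rcases hlam a (hFE haF) e₀ he₀E hae with h | h | h | h
        · exact h
        · exact absurd (hmaxeq a haF h) hae
        · exact absurd (Or.inl h) hnd
        · exact absurd (Or.inr h) hnd
    have hwdeq : ∀ (g₁ : V → ℝ) (c : ℝ) (g : V → ℝ),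
        (∀ q ∈ gapsUnder f e₀, g q = c * g₁ q) →
        ∀ a, Nst f a e₀ → wd f g a = c * wd f g₁ a := by
      intro g₁ c g hg a ha
      rw [wd, wd, Finset.mul_sum]
      exact Finset.sum_congr rfl fun q hq => hg q (nst_gapsUnder ha hq)
    have hfe : Finset.univ.filter (fun q => q ∈ gapsUnder f e₀) = gapsUnder f e₀ := by
      ext q; simp [gapsUnder]
    by_cases hF2 : (F.filter fun a => f a.2 ≤ f e₀.1 ∨ f e₀.2 ≤ f a.1) = ∅
    · -- Case A : every other edge of F is nested into e₀
      have hndall : ∀ a ∈ F, ¬ (f a.2 ≤ f e₀.1 ∨ f e₀.2 ≤ f a.1) :=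
        Finset.filter_eq_empty_iff.mp hF2
      have hcard' : (F.erase e₀).card ≤ k := by
        have := Finset.card_erase_lt_of_mem he₀F
        omega
      obtain ⟨g₁, hg₁pos, hg₁sum, hg₁chain⟩ := ih (F.erase e₀) hcard'
        (Finset.Subset.trans (Finset.erase_subset _ _) hFE) (ε/2) (by linarith)
      have hs0 : 0 < wd f g₁ e₀ := wd_pos hg₁pos he₀lt
      have hs1 : wd f g₁ e₀ ≤ 1 := by
        calc wd f g₁ e₀ ≤ ∑ v, g₁ v := Finset.sum_le_sum_of_subset_of_nonneg
              (Finset.subset_univ _) (fun i _ _ => le_of_lt (hg₁pos i))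
        _ ≤ 1 := hg₁sum
      set s := wd f g₁ e₀ with hs
      set σ := ∑ p ∈ F, ω' p with hσ
      set θ : ℝ := (ε/2)/(σ + ε) with hθdef
      have hσε : 0 < σ + ε := by linarith
      have hθ0 : 0 < θ := by positivity
      have hθ1 : θ < 1 := by rw [hθdef, div_lt_one hσε]; linarith
      have h1θ : 0 < 1 - θ := by linarith
      have hkey : (σ + ε) * (1 - θ) = σ + ε/2 := by
        rw [hθdef]; field_simp; ring
      set g : V → ℝ := fun q => if q ∈ gapsUnder f e₀ then (1-θ)/s * g₁ q
        else θ/((Fintype.card V : ℝ) + 1) with hg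
      have hgpos : ∀ v, 0 < g v := by
        intro v; rw [hg]; dsimp only
        split
        · exact mul_pos (div_pos h1θ hs0) (hg₁pos v)
        · positivity
      have hin : ∀ q ∈ gapsUnder f e₀, g q = (1-θ)/s * g₁ q := by
        intro q hq; rw [hg]; simp [hq]
      have hwde₀ : wd f g e₀ = 1 - θ := by
        rw [hwdeq g₁ ((1-θ)/s) g hin e₀ (nst_refl f e₀)]
        rw [div_mul_eq_mul_div, mul_div_assoc, div_self (ne_of_gt hs0), mul_one]
      have hsum : ∑ v, g v ≤ 1 := by
        rw [← Finset.sum_filter_add_sum_filter_not Finset.univ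
          (fun q => q ∈ gapsUnder f e₀) g]
        have h1 : ∑ q ∈ Finset.univ.filter (fun q => q ∈ gapsUnder f e₀), g q = 1 - θ := by
          rw [hfe]; exact hwde₀
        have h2 : ∑ q ∈ Finset.univ.filter (fun q => ¬ q ∈ gapsUnder f e₀), g q ≤ θ := by
          have hval : ∀ q ∈ Finset.univ.filter (fun q => ¬ q ∈ gapsUnder f e₀),
              g q = θ/((Fintype.card V : ℝ) + 1) := by
            intro q hq
            rw [hg]
            simp only [Finset.mem_filter] at hq
            simp [hq.2]
          rw [Finset.sum_congr rfl hval, Finset.sum_const, nsmul_eq_mul]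
          have hcle : ((Finset.univ.filter (fun q => ¬ q ∈ gapsUnder f e₀)).card : ℝ)
              ≤ (Fintype.card V : ℝ) + 1 := by
            have := Finset.card_filter_le (Finset.univ : Finset V)
              (fun q => ¬ q ∈ gapsUnder f e₀)
            rw [Finset.card_univ] at this
            exact_mod_cast le_trans this (Nat.le_succ _)
          calc ((Finset.univ.filter (fun q => ¬ q ∈ gapsUnder f e₀)).card : ℝ)
              * (θ/((Fintype.card V : ℝ) + 1))
              ≤ ((Fintype.card V : ℝ) + 1) * (θ/((Fintype.card V : ℝ) + 1)) := by
                apply mul_le_mul_of_nonneg_right hcle (by positivity)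
          _ = θ := by field_simp
        linarith
      refine ⟨g, hgpos, hsum, ?_⟩
      intro C hCF hch
      have hterm : ∀ a ∈ C, a ≠ e₀ → ω' a / wd f g a ≤ (ω' a / wd f g₁ a) / (1 - θ) := by
        intro a haC hane
        have haE : a ∈ E := hFE (hCF haC)
        have hanst : Nst f a e₀ := hnst a (hCF haC) (hndall a (hCF haC))
        have hw1 : 0 < wd f g₁ a := wd_pos hg₁pos (hE a haE)
        have hweq : wd f g a = (1-θ)/s * wd f g₁ a := hwdeq g₁ _ g hin a hanst
        have hge : (1-θ) * wd f g₁ a ≤ wd f g a := by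
          rw [hweq]
          have hc : (1-θ) ≤ (1-θ)/s := by
            rw [le_div_iff₀ hs0]
            nlinarith
          nlinarith
        calc ω' a / wd f g a ≤ ω' a / ((1-θ) * wd f g₁ a) := by
              apply div_le_div_of_nonneg_left (le_of_lt (hω a haE)) (mul_pos h1θ hw1) hge
        _ = (ω' a / wd f g₁ a) / (1 - θ) := by
              rw [mul_comm, ← div_div]
      have hsum' : σ = ω' e₀ + ∑ p ∈ F.erase e₀, ω' p := (Finset.add_sum_erase _ _ he₀F).symm
      by_cases he₀C : e₀ ∈ C
      · have hCsub : C.erase e₀ ⊆ F.erase e₀ := fun a ha =>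
          Finset.mem_erase.mpr ⟨(Finset.mem_erase.mp ha).1, hCF (Finset.mem_of_mem_erase ha)⟩
        have h3 : ∑ p ∈ C.erase e₀, ω' p / wd f g₁ p ≤ (∑ p ∈ F.erase e₀, ω' p) + ε/2 :=
          hg₁chain _ hCsub (fun p hp q hq =>
            hch p (Finset.mem_of_mem_erase hp) q (Finset.mem_of_mem_erase hq))
        have h2 : ∑ p ∈ C.erase e₀, ω' p / wd f g p
            ≤ (∑ p ∈ C.erase e₀, ω' p / wd f g₁ p) / (1-θ) := by
          rw [Finset.sum_div]
          apply Finset.sum_le_sum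
          intro a ha
          exact hterm a (Finset.mem_of_mem_erase ha) (Finset.mem_erase.mp ha).1
        have h4 : (∑ p ∈ C.erase e₀, ω' p / wd f g₁ p) / (1-θ)
            ≤ ((∑ p ∈ F.erase e₀, ω' p) + ε/2) / (1-θ) := by
          exact (div_le_div_iff_of_pos_right h1θ).mpr h3
        have hgoal : ω' e₀ / (1-θ) + ((∑ p ∈ F.erase e₀, ω' p) + ε/2) / (1-θ) = σ + ε := by
          rw [← add_div, div_eq_iff (ne_of_gt h1θ)]
          linarith [hkey]
        calc ∑ p ∈ C, ω' p / wd f g p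
            = ω' e₀ / wd f g e₀ + ∑ p ∈ C.erase e₀, ω' p / wd f g p :=
              (Finset.add_sum_erase _ _ he₀C).symm
        _ ≤ ω' e₀ / (1-θ) + ((∑ p ∈ F.erase e₀, ω' p) + ε/2) / (1-θ) := by
              rw [hwde₀]; linarith
        _ = σ + ε := hgoal
      · have hCsub : C ⊆ F.erase e₀ := fun a ha =>
          Finset.mem_erase.mpr ⟨fun hh' => he₀C (hh' ▸ ha), hCF ha⟩
        have h3 : ∑ p ∈ C, ω' p / wd f g₁ p ≤ (∑ p ∈ F.erase e₀, ω' p) + ε/2 :=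
          hg₁chain _ hCsub hch
        have h2 : ∑ p ∈ C, ω' p / wd f g p ≤ (∑ p ∈ C, ω' p / wd f g₁ p) / (1-θ) := by
          rw [Finset.sum_div]
          apply Finset.sum_le_sum
          intro a ha
          exact hterm a ha (fun hh' => he₀C (hh' ▸ ha))
        have h4 : (∑ p ∈ C, ω' p / wd f g₁ p) / (1-θ) ≤ (σ + ε/2)/(1-θ) := by
          apply (div_le_div_iff_of_pos_right h1θ).mpr
          have hle : (∑ p ∈ F.erase e₀, ω' p) ≤ σ := by
            rw [hsum']; linarith [hω e₀ he₀E]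
          linarith
        have heq2 : (σ + ε/2)/(1-θ) = σ + ε := by
          rw [div_eq_iff (ne_of_gt h1θ)]; linarith [hkey]
        linarith
    · -- Case B : split into the part nested in e₀ and the part disjoint from e₀
      set F₂ := F.filter (fun a => f a.2 ≤ f e₀.1 ∨ f e₀.2 ≤ f a.1) with hF₂def
      set F₁ := F.filter (fun a => ¬ (f a.2 ≤ f e₀.1 ∨ f e₀.2 ≤ f a.1)) with hF₁def
      have hF₂ne : F₂.Nonempty := Finset.nonempty_of_ne_empty hF2
      have he₀nD : ¬ (f e₀.2 ≤ f e₀.1 ∨ f e₀.2 ≤ f e₀.1) := by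
        push_neg; exact ⟨he₀lt, he₀lt⟩
      have he₀1 : e₀ ∈ F₁ := by
        rw [hF₁def]
        refine Finset.mem_filter.mpr ⟨he₀F, ?_⟩
        push_neg
        exact ⟨he₀lt, by linarith⟩
      have he₀2 : e₀ ∉ F₂ := by
        rw [hF₂def]
        intro hb
        rcases (Finset.mem_filter.mp hb).2 with h | h <;> linarith
      have hc1 : F₁.card ≤ k := by
        have hss : F₁ ⊂ F := by
          obtain ⟨b, hb⟩ := hF₂ne
          refine (Finset.ssubset_iff_of_subset (Finset.filter_subset _ _)).mpr ?_
          refine ⟨b, (Finset.mem_filter.mp hb).1, fun hb1 => ?_⟩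
          exact (Finset.mem_filter.mp hb1).2 (Finset.mem_filter.mp hb).2
        have := Finset.card_lt_card hss
        omega
      have hc2 : F₂.card ≤ k := by
        have hss : F₂ ⊂ F := by
          refine (Finset.ssubset_iff_of_subset (Finset.filter_subset _ _)).mpr ?_
          exact ⟨e₀, he₀F, he₀2⟩
        have := Finset.card_lt_card hss
        omega
      obtain ⟨g₁, hg₁pos, hg₁sum, hg₁chain⟩ := ih F₁ hc1
        (Finset.Subset.trans (Finset.filter_subset _ _) hFE) (ε/2) (by linarith)
      obtain ⟨g₂, hg₂pos, hg₂sum, hg₂chain⟩ := ih F₂ hc2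
        (Finset.Subset.trans (Finset.filter_subset _ _) hFE) (ε/2) (by linarith)
      have hs0 : 0 < wd f g₁ e₀ := wd_pos hg₁pos he₀lt
      have hs1 : wd f g₁ e₀ ≤ 1 := by
        calc wd f g₁ e₀ ≤ ∑ v, g₁ v := Finset.sum_le_sum_of_subset_of_nonneg
              (Finset.subset_univ _) (fun i _ _ => le_of_lt (hg₁pos i))
        _ ≤ 1 := hg₁sum
      set s := wd f g₁ e₀ with hs
      set σ := ∑ p ∈ F, ω' p with hσ
      set σ₁ := ∑ p ∈ F₁, ω' p with hσ₁
      set σ₂ := ∑ p ∈ F₂, ω' p with hσ₂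
      have hσ₁0 : 0 ≤ σ₁ := Finset.sum_nonneg fun p hp =>
        le_of_lt (hω p (hFE (Finset.mem_of_mem_filter _ hp)))
      have hσ₂0 : 0 ≤ σ₂ := Finset.sum_nonneg fun p hp =>
        le_of_lt (hω p (hFE (Finset.mem_of_mem_filter _ hp)))
      have hσsplit : σ = σ₂ + σ₁ := by
        rw [hσ, hσ₂, hσ₁, hF₂def, hF₁def]
        exact (Finset.sum_filter_add_sum_filter_not F _ ω').symm
      have hσε : 0 < σ + ε := by linarith
      set β : ℝ := (σ₁ + ε/2)/(σ + ε) with hβdef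
      set β' : ℝ := (σ₂ + ε/2)/(σ + ε) with hβ'def
      have hβ0 : 0 < β := by rw [hβdef]; positivity
      have hβ'0 : 0 < β' := by rw [hβ'def]; positivity
      have hββ' : β + β' = 1 := by
        rw [hβdef, hβ'def, ← add_div, div_eq_one_iff_eq (ne_of_gt hσε)]
        linarith
      have hβkey : β * (σ + ε) = σ₁ + ε/2 := by
        rw [hβdef, div_mul_eq_mul_div, mul_div_assoc, div_self (ne_of_gt hσε), mul_one]
      have hβ'key : β' * (σ + ε) = σ₂ + ε/2 := by
        rw [hβ'def, div_mul_eq_mul_div, mul_div_assoc, div_self (ne_of_gt hσε), mul_one]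
      set g : V → ℝ := fun q => if q ∈ gapsUnder f e₀ then β/s * g₁ q else β' * g₂ q with hg
      have hgpos : ∀ v, 0 < g v := by
        intro v; rw [hg]; dsimp only
        split
        · exact mul_pos (div_pos hβ0 hs0) (hg₁pos v)
        · exact mul_pos hβ'0 (hg₂pos v)
      have hin : ∀ q ∈ gapsUnder f e₀, g q = β/s * g₁ q := by
        intro q hq; rw [hg]; simp [hq]
      have hsum : ∑ v, g v ≤ 1 := by
        rw [← Finset.sum_filter_add_sum_filter_not Finset.univ
          (fun q => q ∈ gapsUnder f e₀) g]
        have h1 : ∑ q ∈ Finset.univ.filter (fun q => q ∈ gapsUnder f e₀), g q = β := by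
          rw [hfe, Finset.sum_congr rfl hin, ← Finset.mul_sum]
          have hsrfl : ∑ q ∈ gapsUnder f e₀, g₁ q = s := rfl
          rw [hsrfl, div_mul_eq_mul_div, mul_div_assoc, div_self (ne_of_gt hs0), mul_one]
        have h2 : ∑ q ∈ Finset.univ.filter (fun q => ¬ q ∈ gapsUnder f e₀), g q ≤ β' := by
          have hval : ∀ q ∈ Finset.univ.filter (fun q => ¬ q ∈ gapsUnder f e₀),
              g q = β' * g₂ q := by
            intro q hq
            rw [hg]
            simp only [Finset.mem_filter] at hq
            simp [hq.2]
          rw [Finset.sum_congr rfl hval, ← Finset.mul_sum]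
          have hle1 : ∑ q ∈ Finset.univ.filter (fun q => ¬ q ∈ gapsUnder f e₀), g₂ q ≤ 1 := by
            calc ∑ q ∈ Finset.univ.filter (fun q => ¬ q ∈ gapsUnder f e₀), g₂ q
                ≤ ∑ v, g₂ v := Finset.sum_le_sum_of_subset_of_nonneg
                  (Finset.filter_subset _ _) (fun i _ _ => le_of_lt (hg₂pos i))
            _ ≤ 1 := hg₂sum
          calc β' * ∑ q ∈ Finset.univ.filter (fun q => ¬ q ∈ gapsUnder f e₀), g₂ q
              ≤ β' * 1 := mul_le_mul_of_nonneg_left hle1 (le_of_lt hβ'0)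
          _ = β' := mul_one _
        linarith
      refine ⟨g, hgpos, hsum, ?_⟩
      intro C hCF hch
      -- a chain is entirely inside F₁ or entirely inside F₂
      have hsplitC : C ⊆ F₁ ∨ C ⊆ F₂ := by
        by_cases hex : ∃ a ∈ C, f a.2 ≤ f e₀.1 ∨ f e₀.2 ≤ f a.1
        · right
          obtain ⟨a, haC, haD⟩ := hex
          intro b hbC
          rw [hF₂def]
          refine Finset.mem_filter.mpr ⟨hCF hbC, ?_⟩
          by_contra hbD
          have hbn : Nst f b e₀ := hnst b (hCF hbC) hbD
          have halt : f a.1 < f a.2 := hE a (hFE (hCF haC))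
          have hblt : f b.1 < f b.2 := hE b (hFE (hCF hbC))
          rcases hch a haC b hbC with hn | hn <;> rcases haD with h | h <;>
            · exact absurd h (by linarith [hn.1, hn.2, hbn.1, hbn.2, halt, hblt])
        · left
          push_neg at hex
          intro b hbC
          rw [hF₁def]
          refine Finset.mem_filter.mpr ⟨hCF hbC, ?_⟩
          push_neg
          exact hex b hbC
      rcases hsplitC with hC1 | hC2
      · -- chain inside e₀
        have hterm : ∀ a ∈ C, ω' a / wd f g a ≤ (ω' a / wd f g₁ a) / β := by
          intro a haC
          have haF₁ := hC1 haC
          have haE : a ∈ E := hFE (hCF haC)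
          have hanst : Nst f a e₀ :=
            hnst a (Finset.mem_of_mem_filter _ haF₁) (Finset.mem_filter.mp haF₁).2
          have hw1 : 0 < wd f g₁ a := wd_pos hg₁pos (hE a haE)
          have hweq : wd f g a = β/s * wd f g₁ a := hwdeq g₁ _ g hin a hanst
          have hge : β * wd f g₁ a ≤ wd f g a := by
            rw [hweq]
            have hc : β ≤ β/s := by
              rw [le_div_iff₀ hs0]
              nlinarith
            nlinarith
          calc ω' a / wd f g a ≤ ω' a / (β * wd f g₁ a) :=
                div_le_div_of_nonneg_left (le_of_lt (hω a haE)) (mul_pos hβ0 hw1) hge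
          _ = (ω' a / wd f g₁ a) / β := by rw [mul_comm, ← div_div]
        have h2 : ∑ p ∈ C, ω' p / wd f g p ≤ (∑ p ∈ C, ω' p / wd f g₁ p) / β := by
          rw [Finset.sum_div]
          exact Finset.sum_le_sum hterm
        have h3 : (∑ p ∈ C, ω' p / wd f g₁ p) / β ≤ (σ₁ + ε/2) / β :=
          (div_le_div_iff_of_pos_right hβ0).mpr (hg₁chain C hC1 hch)
        have h4 : (σ₁ + ε/2) / β = σ + ε := by
          rw [div_eq_iff (ne_of_gt hβ0)]
          linarith [hβkey]
        linarith
      · -- chain disjoint from e₀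
        have hdisj : ∀ a ∈ F₂, ∀ q ∈ gapsUnder f a, q ∉ gapsUnder f e₀ := by
          intro a ha q hq hq0
          simp only [gapsUnder, Finset.mem_filter, Finset.mem_univ, true_and] at hq hq0
          rcases (Finset.mem_filter.mp ha).2 with h | h
          · linarith [hq.2, hq0.1]
          · linarith [hq.1, hq0.2]
        have hterm : ∀ a ∈ C, ω' a / wd f g a = (ω' a / wd f g₂ a) / β' := by
          intro a haC
          have haF₂ := hC2 haC
          have hweq : wd f g a = β' * wd f g₂ a := by
            rw [wd, wd, Finset.mul_sum]
            refine Finset.sum_congr rfl fun q hq => ?_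
            rw [hg]
            simp [hdisj a haF₂ q hq]
          rw [hweq, mul_comm, ← div_div]
        have h2 : ∑ p ∈ C, ω' p / wd f g p = (∑ p ∈ C, ω' p / wd f g₂ p) / β' := by
          rw [Finset.sum_div]
          exact Finset.sum_congr rfl hterm
        have h3 : (∑ p ∈ C, ω' p / wd f g₂ p) / β' ≤ (σ₂ + ε/2) / β' :=
          (div_le_div_iff_of_pos_right hβ'0).mpr (hg₂chain C hC2 hch)
        have h4 : (σ₂ + ε/2) / β' = σ + ε := by
          rw [div_eq_iff (ne_of_gt hβ'0)]
          linarith [hβ'key]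
        linarith

end GapLemma

/-- for every `ε > 0`, every weighted graph admitting a 1-page
book-embedding (i.e., every weighted outerplanar graph) admits a two-dimensional
book-embedding whose area is at most the total edge weight plus `ε`. -/
theorem twodim_embedding_small_area {V : Type*} [Fintype V]
    (G : SimpleGraph V) (ω : V → V → ℝ)
    (hsym : ∀ u v, ω u v = ω v u)
    (hpos : ∀ u v, G.Adj u v → 0 < ω u v)
    (ε : ℝ) (hε : 0 < ε)
    (houter : ∃ f : V → ℝ, IsBE G f) :
    ∃ (x : V → ℝ) (ylo yhi : V → V → ℝ),
      IsTwoDimBE G ω x ylo yhi ∧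
      ∃ X₁ X₂ Y₁ Y₂ : ℝ,
        (∀ u v : V, G.Adj u v → x u < x v →
          X₁ ≤ x u ∧ x v ≤ X₂ ∧ Y₁ ≤ ylo u v ∧ yhi u v ≤ Y₂) ∧
        (X₂ - X₁) * (Y₂ - Y₁) ≤ totalWeight G ω x + ε := by
  classical
  obtain ⟨f, hf⟩ := houter
  obtain ⟨hinj, hcross⟩ := hf
  set E : Finset (V × V) :=
    Finset.univ.filter (fun p : V × V => G.Adj p.1 p.2 ∧ f p.1 < f p.2) with hEdef
  have hmemE : ∀ p : V × V, p ∈ E ↔ G.Adj p.1 p.2 ∧ f p.1 < f p.2 := by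
    intro p; rw [hEdef]; simp
  have hE : ∀ p ∈ E, f p.1 < f p.2 := fun p hp => ((hmemE p).mp hp).2
  have hEadj : ∀ p ∈ E, G.Adj p.1 p.2 := fun p hp => ((hmemE p).mp hp).1
  set ω' : V × V → ℝ := fun p => ω p.1 p.2 with hω'def
  have hω : ∀ p ∈ E, 0 < ω' p := fun p hp => hpos _ _ (hEadj p hp)
  have hlam : ∀ p ∈ E, ∀ q ∈ E, p ≠ q →
      Nst f p q ∨ Nst f q p ∨ f p.2 ≤ f q.1 ∨ f q.2 ≤ f p.1 := by
    intro p hp q hq hpq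
    obtain ⟨hadjp, hltp⟩ := (hmemE p).mp hp
    obtain ⟨hadjq, hltq⟩ := (hmemE q).mp hq
    by_cases h1 : f p.2 ≤ f q.1
    · exact Or.inr (Or.inr (Or.inl h1))
    by_cases h2 : f q.2 ≤ f p.1
    · exact Or.inr (Or.inr (Or.inr h2))
    push_neg at h1 h2
    rcases lt_trichotomy (f p.1) (f q.1) with h3 | h3 | h3
    · have h4 : f q.2 ≤ f p.2 := by
        by_contra h5
        push_neg at h5
        exact (hcross p.1 p.2 q.1 q.2 hadjp hadjq) ⟨h3, h1, h5⟩
      exact Or.inr (Or.inl ⟨le_of_lt h3, h4⟩)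
    · rcases le_total (f p.2) (f q.2) with h4 | h4
      · exact Or.inl ⟨le_of_eq h3.symm, h4⟩
      · exact Or.inr (Or.inl ⟨le_of_eq h3, h4⟩)
    · have h4 : f p.2 ≤ f q.2 := by
        by_contra h5
        push_neg at h5
        exact (hcross q.1 q.2 p.1 p.2 hadjq hadjp) ⟨h3, h2, h5⟩
      exact Or.inl ⟨le_of_lt h3, h4⟩
  obtain ⟨g, hgpos, hgsum, hgchain⟩ := gapLemma f hinj ω' E hE hω hlam E.card E le_rfl
    (Finset.Subset.refl E) ε hε
  set x : V → ℝ := fun v => ∑ q ∈ Finset.univ.filter (fun q => f q < f v), g q with hxdef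
  have hxdiff : ∀ u v : V, f u ≤ f v →
      x v = x u + ∑ q ∈ Finset.univ.filter (fun q => f u ≤ f q ∧ f q < f v), g q := by
    intro u v huv
    rw [hxdef]
    dsimp only
    rw [← Finset.sum_filter_add_sum_filter_not (Finset.univ.filter (fun q => f q < f v))
      (fun q => f q < f u) g]
    congr 1
    · apply Finset.sum_congr ?_ (fun q _ => rfl)
      ext q
      simp only [Finset.mem_filter, Finset.mem_univ, true_and]
      exact ⟨fun hh' => hh'.2, fun hh' => ⟨lt_of_lt_of_le hh' huv, hh'⟩⟩
    · apply Finset.sum_congr ?_ (fun q _ => rfl)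
      ext q
      simp only [Finset.mem_filter, Finset.mem_univ, true_and, not_lt]
      tauto
  have hgap : ∀ p : V × V, f p.1 ≤ f p.2 → x p.2 - x p.1 = wd f g p := by
    intro p hp
    rw [hxdiff p.1 p.2 hp, wd, gapsUnder]
    ring
  have hxlt : ∀ u v : V, f u < f v → x u < x v := by
    intro u v huv
    rw [hxdiff u v (le_of_lt huv)]
    have hps : 0 < ∑ q ∈ Finset.univ.filter (fun q => f u ≤ f q ∧ f q < f v), g q := by
      apply Finset.sum_pos (fun i _ => hgpos i)
      exact ⟨u, by simp [le_refl, huv]⟩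
    linarith
  have hxltiff : ∀ u v : V, x u < x v ↔ f u < f v := by
    intro u v
    constructor
    · intro hh'
      rcases lt_trichotomy (f u) (f v) with h1 | h1 | h1
      · exact h1
      · have h2 := hinj h1
        subst h2
        exact absurd hh' (lt_irrefl _)
      · exact absurd (hxlt v u h1) (not_lt.mpr (le_of_lt hh'))
    · exact hxlt u v
  have hxle : ∀ u v : V, x u ≤ x v ↔ f u ≤ f v := by
    intro u v
    rw [← not_lt, ← not_lt, hxltiff v u]
  have hxinj : Function.Injective x := by
    intro u v huv
    rcases lt_trichotomy (f u) (f v) with h1 | h1 | h1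
    · have := hxlt u v h1
      rw [huv] at this
      exact absurd this (lt_irrefl _)
    · exact hinj h1
    · have := hxlt v u h1
      rw [huv] at this
      exact absurd this (lt_irrefl _)
  have hxBE : IsBE G x := by
    refine ⟨hxinj, ?_⟩
    intro a b c d hab hcd
    simp only [hxltiff]
    exact hcross a b c d hab hcd
  set h : V × V → ℝ := fun p => ω' p / (x p.2 - x p.1) with hhdef
  have hwx : ∀ p ∈ E, 0 < x p.2 - x p.1 := by
    intro p hp
    rw [hgap p (le_of_lt (hE p hp))]
    exact wd_pos hgpos (hE p hp)
  have hh0 : ∀ p ∈ E, 0 ≤ h p := by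
    intro p hp
    rw [hhdef]
    exact le_of_lt (div_pos (hω p hp) (hwx p hp))
  set σ := ∑ p ∈ E, ω' p with hσdef
  have hpsile : ∀ e ∈ E, Psi f E h e ≤ σ + ε := by
    intro e he
    apply psi_le (f := f) he
    intro C hC
    simp only [chainsTop, Finset.mem_filter, Finset.mem_powerset] at hC
    obtain ⟨hCE, -, -, hch⟩ := hC
    calc ∑ p ∈ C, h p = ∑ p ∈ C, ω' p / wd f g p := by
          apply Finset.sum_congr rfl
          intro p hp
          rw [hhdef]
          dsimp only
          rw [hgap p (le_of_lt (hE p (hCE hp)))]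
    _ ≤ σ + ε := hgchain C hCE hch
  have hmem' : ∀ u v : V, G.Adj u v → x u < x v → (u, v) ∈ E := by
    intro u v hadj hx
    exact (hmemE (u, v)).mpr ⟨hadj, (hxltiff u v).mp hx⟩
  have hwrapsWr : ∀ u v w z : V, Wraps G x u v w z →
      (w, z) ∈ Wr f E (u, v) ∧ x w < x z := by
    intro u v w z hw
    obtain ⟨-, hadjwz, hsne, h1, h2, h3⟩ := hw
    have hwz : (w, z) ∈ E := (hmemE (w, z)).mpr ⟨hadjwz, (hxltiff w z).mp h2⟩
    have hne : (w, z) ≠ (u, v) := by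
      intro hcontr
      rw [Prod.mk.injEq] at hcontr
      exact hsne (by rw [hcontr.1, hcontr.2])
    refine ⟨Finset.mem_filter.mpr ⟨hwz, hne, ?_⟩, h2⟩
    exact ⟨(hxle u w).mp h1, (hxle z v).mp h3⟩
  have hWrwraps : ∀ u v : V, G.Adj u v → x u < x v → ∀ t ∈ Wr f E (u, v),
      Wraps G x u v t.1 t.2 ∧ x t.1 < x t.2 := by
    intro u v hadj hx t ht
    obtain ⟨htE, htne, htnst⟩ := Finset.mem_filter.mp ht
    obtain ⟨hadjt, hltt⟩ := (hmemE t).mp htE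
    have hxt : x t.1 < x t.2 := hxlt _ _ hltt
    have hfuv : f u < f v := (hxltiff u v).mp hx
    refine ⟨⟨hadj, hadjt, ?_, (hxle u t.1).mpr htnst.1, hxt, (hxle t.2 v).mpr htnst.2⟩, hxt⟩
    intro hs
    rcases Sym2.eq_iff.mp hs with ⟨ha, hb⟩ | ⟨ha, hb⟩
    · exact htne (Prod.ext ha.symm hb.symm)
    · have : f v < f u := by rw [hb, ha]; exact hltt
      linarith
  refine ⟨x, (fun u v => if x u < x v then Mlo f E h (u, v) else Mlo f E h (v, u)),
    (fun u v => if x u < x v then Psi f E h (u, v) else Psi f E h (v, u)),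
    ⟨hxBE, ?_, ?_, ?_, ?_, ?_⟩, ?_⟩
  · -- ylo symmetric
    intro u v
    dsimp only
    rcases lt_trichotomy (x u) (x v) with h1 | h1 | h1
    · rw [if_pos h1, if_neg (asymm h1)]
    · have h2 : u = v := hxinj h1
      subst h2
      rfl
    · rw [if_neg (asymm h1), if_pos h1]
  · -- yhi symmetric
    intro u v
    dsimp only
    rcases lt_trichotomy (x u) (x v) with h1 | h1 | h1
    · rw [if_pos h1, if_neg (asymm h1)]
    · have h2 : u = v := hxinj h1
      subst h2
      rfl
    · rw [if_neg (asymm h1), if_pos h1]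
  · -- ylo nonneg
    intro u v hadj
    dsimp only
    split
    · exact mlo_nonneg hh0 _
    · exact mlo_nonneg hh0 _
  · -- area of each rectangle
    intro u v hadj hx
    have hE' := hmem' u v hadj hx
    dsimp only
    rw [if_pos hx, if_pos hx]
    have hps : Psi f E h (u, v) - Mlo f E h (u, v) = h (u, v) := by
      rw [psi_eq (f := f) hinj hh0 hE']
      ring
    rw [hps, hhdef]
    dsimp only
    have hne : x v - x u ≠ 0 := ne_of_gt (by linarith)
    rw [hω'def]
    dsimp only
    field_simp
  · -- nesting conditions
    intro u v hadj hx
    have hE' := hmem' u v hadj hx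
    constructor
    · intro w z hw
      obtain ⟨hWr, hxwz⟩ := hwrapsWr u v w z hw
      dsimp only
      rw [if_pos hx, if_pos hxwz]
      exact le_mlo (f := f) (h := h) hWr
    · rcases mlo_cases f E h (u, v) with ⟨t, htWr, heq⟩ | ⟨hWe, heq⟩
      · left
        obtain ⟨hwr, hxt⟩ := hWrwraps u v hadj hx t htWr
        refine ⟨t.1, t.2, hwr, ?_⟩
        dsimp only
        rw [if_pos hx, if_pos hxt, heq, Prod.mk.eta]
      · right
        constructor
        · rintro ⟨w, z, hw⟩
          have hmemw := (hwrapsWr u v w z hw).1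
          rw [hWe] at hmemw
          exact absurd hmemw (Finset.notMem_empty _)
        · dsimp only
          rw [if_pos hx]
          exact heq
  · -- bounding box
    refine ⟨0, 1, 0, σ + ε, ?_, ?_⟩
    · intro u v hadj hx
      have hE' := hmem' u v hadj hx
      refine ⟨?_, ?_, ?_, ?_⟩
      · rw [hxdef]
        dsimp only
        exact Finset.sum_nonneg fun q _ => le_of_lt (hgpos q)
      · rw [hxdef]
        dsimp only
        calc ∑ q ∈ Finset.univ.filter (fun q => f q < f v), g q
            ≤ ∑ q, g q := Finset.sum_le_sum_of_subset_of_nonneg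
              (Finset.filter_subset _ _) (fun i _ _ => le_of_lt (hgpos i))
        _ ≤ 1 := hgsum
      · dsimp only
        rw [if_pos hx]
        exact mlo_nonneg hh0 _
      · dsimp only
        rw [if_pos hx]
        exact hpsile (u, v) hE'
    · have htw : totalWeight G ω x = σ := by
        rw [totalWeight, ← Finset.sum_filter, hσdef]
        apply Finset.sum_congr ?_ (fun p _ => rfl)
        rw [hEdef]
        ext p
        simp only [Finset.mem_filter, Finset.mem_univ, true_and]
        exact and_congr_right fun _ => hxltiff p.1 p.2
      rw [htw]
      nlinarith [hε]

end Schematic
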